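/- If the true ramping limits ν_min, ν_max : Φ → ℝ are continuous on a compact set Φ ⊂ ℝ^δ with ν_min(φ) < ν_max(φ) for all φ, then for every ε > 0 there exist piecewise-affine (hence continuous) functions p_min, p_max with ν_min ≤ p_min ≤ p_max ≤ ν_max on Φ and coverage (p_max(φ) - p_min(φ))/(ν_max(φ) - ν_min(φ)) ≥ 1 - ε for all φ ∈ Φ. -/

import Mathlib

/-- A piecewise-affine function: a finite max of finite mins of affine functions. -/
def IsPWA {d : ℕ} (f : (Fin d → ℝ) → ℝ) : Prop :=
  ∃ (m n : ℕ) (a : Fin (m + 1) → Fin (n + 1) → (Fin d → ℝ))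
    (b : Fin (m + 1) → Fin (n + 1) → ℝ),
    ∀ x, f x = Finset.univ.sup' Finset.univ_nonempty
      (fun i => Finset.univ.inf' Finset.univ_nonempty
        (fun j => (∑ k, a i j k * x k) + b i j))

section lattice
variable {α : Type*} [SemilatticeSup α] {ι κ : Type*} [Fintype ι] [Fintype κ]
  [Nonempty ι] [Nonempty κ]

lemma my_sup'_sum (f : ι ⊕ κ → α) :
    Finset.univ.sup' Finset.univ_nonempty f =
      (Finset.univ.sup' Finset.univ_nonempty (fun i => f (Sum.inl i))) ⊔
        (Finset.univ.sup' Finset.univ_nonempty (fun j => f (Sum.inr j))) := by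
  apply le_antisymm
  · refine Finset.sup'_le _ _ ?_
    rintro (i | j) _
    · exact le_sup_of_le_left (Finset.le_sup' (fun i => f (Sum.inl i)) (Finset.mem_univ i))
    · exact le_sup_of_le_right (Finset.le_sup' (fun j => f (Sum.inr j)) (Finset.mem_univ j))
  · exact sup_le (Finset.sup'_le _ _ fun i _ => Finset.le_sup' f (Finset.mem_univ (Sum.inl i)))
      (Finset.sup'_le _ _ fun j _ => Finset.le_sup' f (Finset.mem_univ (Sum.inr j)))

lemma my_sup'_equiv {β : Type*} [Fintype β] [Nonempty β] (e : β ≃ ι) (g : ι → α) :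
    Finset.univ.sup' Finset.univ_nonempty (fun b => g (e b)) =
      Finset.univ.sup' Finset.univ_nonempty g := by
  refine le_antisymm (Finset.sup'_le _ _ fun b _ => Finset.le_sup' g (Finset.mem_univ (e b)))
    (Finset.sup'_le _ _ fun i _ => ?_)
  have := Finset.le_sup' (fun b => g (e b)) (Finset.mem_univ (e.symm i))
  simpa using this

lemma my_sup'_prod (f : ι × κ → α) :
    Finset.univ.sup' Finset.univ_nonempty f =
      Finset.univ.sup' Finset.univ_nonempty (fun i =>
        Finset.univ.sup' Finset.univ_nonempty (fun j => f (i, j))) := by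
  apply le_antisymm
  · exact Finset.sup'_le _ _ fun p _ =>
      le_trans (Finset.le_sup' (fun j => f (p.1, j)) (Finset.mem_univ p.2))
        (Finset.le_sup' (fun i => Finset.univ.sup' Finset.univ_nonempty fun j => f (i, j))
          (Finset.mem_univ p.1))
  · exact Finset.sup'_le _ _ fun i _ => Finset.sup'_le _ _ fun j _ =>
      Finset.le_sup' f (Finset.mem_univ (i, j))

lemma my_sup'_add_const (f : ι → ℝ) (c : ℝ) :
    Finset.univ.sup' Finset.univ_nonempty f + c =
      Finset.univ.sup' (Finset.univ_nonempty (α := ι)) (fun i => f i + c) := by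
  apply le_antisymm
  · rw [← le_sub_iff_add_le]
    refine Finset.sup'_le _ _ fun i _ => le_sub_iff_add_le.mpr ?_
    exact Finset.le_sup' (fun i => f i + c) (Finset.mem_univ i)
  · exact Finset.sup'_le _ _ fun i _ =>
      add_le_add_left (Finset.le_sup' f (Finset.mem_univ i)) c

end lattice

section lattice2
variable {α : Type*} [SemilatticeInf α] {ι κ : Type*} [Fintype ι] [Fintype κ]
  [Nonempty ι] [Nonempty κ]

lemma my_inf'_sum (f : ι ⊕ κ → α) :
    Finset.univ.inf' Finset.univ_nonempty f =
      (Finset.univ.inf' Finset.univ_nonempty (fun i => f (Sum.inl i))) ⊓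
        (Finset.univ.inf' Finset.univ_nonempty (fun j => f (Sum.inr j))) :=
  my_sup'_sum (α := αᵒᵈ) f

lemma my_inf'_equiv {β : Type*} [Fintype β] [Nonempty β] (e : β ≃ ι) (g : ι → α) :
    Finset.univ.inf' Finset.univ_nonempty (fun b => g (e b)) =
      Finset.univ.inf' Finset.univ_nonempty g :=
  my_sup'_equiv (α := αᵒᵈ) e g

lemma my_inf'_prod (f : ι × κ → α) :
    Finset.univ.inf' Finset.univ_nonempty f =
      Finset.univ.inf' Finset.univ_nonempty (fun i =>
        Finset.univ.inf' Finset.univ_nonempty (fun j => f (i, j))) :=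
  my_sup'_prod (α := αᵒᵈ) f

end lattice2

lemma my_inf'_add_const {ι : Type*} [Fintype ι] [Nonempty ι] (f : ι → ℝ) (c : ℝ) :
    Finset.univ.inf' Finset.univ_nonempty f + c =
      Finset.univ.inf' (Finset.univ_nonempty (α := ι)) (fun i => f i + c) := by
  apply le_antisymm
  · exact Finset.le_inf' _ _ fun i _ =>
      add_le_add_left (Finset.inf'_le f (Finset.mem_univ i)) c
  · rw [← sub_le_iff_le_add]
    refine Finset.le_inf' _ _ fun i _ => ?_
    have := Finset.inf'_le (fun i => f i + c) (Finset.mem_univ i)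
    linarith [this]

lemma isPWA_rep {d : ℕ} {ι κ : Type} [Fintype ι] [Fintype κ] [Nonempty ι] [Nonempty κ]
    (A : ι → κ → (Fin d → ℝ)) (B : ι → κ → ℝ) {f : (Fin d → ℝ) → ℝ}
    (h : ∀ x, f x = Finset.univ.sup' Finset.univ_nonempty fun i =>
        Finset.univ.inf' Finset.univ_nonempty fun j => (∑ k, A i j k * x k) + B i j) :
    IsPWA f := by
  obtain ⟨m, hm⟩ := Nat.exists_eq_succ_of_ne_zero (Fintype.card_ne_zero (α := ι))
  obtain ⟨n, hn⟩ := Nat.exists_eq_succ_of_ne_zero (Fintype.card_ne_zero (α := κ))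
  let e1 : Fin (m + 1) ≃ ι := (Fintype.equivFinOfCardEq hm).symm
  let e2 : Fin (n + 1) ≃ κ := (Fintype.equivFinOfCardEq hn).symm
  refine ⟨m, n, fun i j => A (e1 i) (e2 j), fun i j => B (e1 i) (e2 j), fun x => ?_⟩
  rw [h x,
    ← my_sup'_equiv e1 (fun i => Finset.univ.inf' Finset.univ_nonempty
      fun j => (∑ k, A i j k * x k) + B i j)]
  congr 1
  funext i
  exact (my_inf'_equiv e2 fun j => (∑ k, A (e1 i) j k * x k) + B (e1 i) j).symm

lemma IsPWA.max {d : ℕ} {f g : (Fin d → ℝ) → ℝ} (hf : IsPWA f) (hg : IsPWA g) :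
    IsPWA (fun x => max (f x) (g x)) := by
  obtain ⟨m1, n1, a1, b1, h1⟩ := hf
  obtain ⟨m2, n2, a2, b2, h2⟩ := hg
  refine isPWA_rep (ι := Fin (m1 + 1) ⊕ Fin (m2 + 1)) (κ := Fin (n1 + 1) × Fin (n2 + 1))
    (Sum.elim (fun i jj => a1 i jj.1) (fun i jj => a2 i jj.2))
    (Sum.elim (fun i jj => b1 i jj.1) (fun i jj => b2 i jj.2)) (fun x => ?_)
  rw [h1 x, h2 x, my_sup'_sum]
  congr 1
  · congr 1
    funext i
    rw [my_inf'_prod]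
    simp
  · congr 1
    funext i
    rw [my_inf'_prod]
    simp

lemma IsPWA.min {d : ℕ} {f g : (Fin d → ℝ) → ℝ} (hf : IsPWA f) (hg : IsPWA g) :
    IsPWA (fun x => min (f x) (g x)) := by
  obtain ⟨m1, n1, a1, b1, h1⟩ := hf
  obtain ⟨m2, n2, a2, b2, h2⟩ := hg
  refine isPWA_rep (ι := Fin (m1 + 1) × Fin (m2 + 1)) (κ := Fin (n1 + 1) ⊕ Fin (n2 + 1))
    (fun ii => Sum.elim (fun j => a1 ii.1 j) (fun j => a2 ii.2 j))
    (fun ii => Sum.elim (fun j => b1 ii.1 j) (fun j => b2 ii.2 j)) (fun x => ?_)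
  rw [h1 x, h2 x, Finset.sup'_inf_distrib_right, my_sup'_prod]
  congr 1
  funext i1
  rw [Finset.sup'_inf_distrib_left]
  congr 1
  funext i2
  rw [my_inf'_sum]
  simp

lemma isPWA_affine {d : ℕ} (a : Fin d → ℝ) (b : ℝ) :
    IsPWA (fun x => (∑ k, a k * x k) + b) :=
  ⟨0, 0, fun _ _ => a, fun _ _ => b, fun x => by simp⟩

lemma isPWA_const {d : ℕ} (c : ℝ) : IsPWA (fun _ : Fin d → ℝ => c) := by
  have := isPWA_affine (d := d) 0 c
  simpa using this

lemma IsPWA.add_const {d : ℕ} {f : (Fin d → ℝ) → ℝ} (hf : IsPWA f) (c : ℝ) :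
    IsPWA (fun x => f x + c) := by
  obtain ⟨m, n, a, b, h⟩ := hf
  refine ⟨m, n, a, fun i j => b i j + c, fun x => ?_⟩
  show f x + c = _
  rw [h x, my_sup'_add_const]
  congr 1
  funext i
  rw [my_inf'_add_const]
  congr 1
  funext j
  rw [add_assoc]

/-- Continuous ramping limits with a strict gap on a compact set can be conservatively
approximated by piecewise-affine limits with coverage at least `1 - ε`. -/
theorem stmt_18 {d : ℕ} (Φ : Set (Fin d → ℝ)) (hΦ : IsCompact Φ)
    (νmin νmax : (Fin d → ℝ) → ℝ)
    (hcmin : ContinuousOn νmin Φ) (hcmax : ContinuousOn νmax Φ)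
    (hlt : ∀ φ ∈ Φ, νmin φ < νmax φ) :
    ∀ ε > (0 : ℝ), ∃ pmin pmax : (Fin d → ℝ) → ℝ,
      IsPWA pmin ∧ IsPWA pmax ∧
      ∀ φ ∈ Φ, νmin φ ≤ pmin φ ∧ pmin φ ≤ pmax φ ∧ pmax φ ≤ νmax φ ∧
        1 - ε ≤ (pmax φ - pmin φ) / (νmax φ - νmin φ) := by
  intro ε hε
  rcases Set.eq_empty_or_nonempty Φ with hΦe | hne
  · exact ⟨fun _ => 0, fun _ => 0, isPWA_const 0, isPWA_const 0, by simp [hΦe]⟩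
  haveI : CompactSpace Φ := isCompact_iff_compactSpace.mp hΦ
  haveI : Nonempty Φ := hne.to_subtype
  set L : Set C(Φ, ℝ) := {F | ∃ p : (Fin d → ℝ) → ℝ, IsPWA p ∧ ∀ x : Φ, F x = p ↑x} with hLdef
  have hconst : ∀ c : ℝ, (⟨fun _ => c, continuous_const⟩ : C(Φ, ℝ)) ∈ L :=
    fun c => ⟨fun _ => c, isPWA_const c, fun _ => rfl⟩
  have hinf : ∀ F ∈ L, ∀ G ∈ L, F ⊓ G ∈ L := by
    rintro F ⟨p, hp, hFp⟩ G ⟨q, hq, hGq⟩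
    exact ⟨fun z => min (p z) (q z), hp.min hq,
      fun z => by simp [ContinuousMap.inf_apply, hFp z, hGq z]⟩
  have hsup : ∀ F ∈ L, ∀ G ∈ L, F ⊔ G ∈ L := by
    rintro F ⟨p, hp, hFp⟩ G ⟨q, hq, hGq⟩
    exact ⟨fun z => max (p z) (q z), hp.max hq,
      fun z => by simp [ContinuousMap.sup_apply, hFp z, hGq z]⟩
  have hsep : L.SeparatesPointsStrongly := by
    intro v x y
    by_cases hxy : x = y
    · subst hxy
      exact ⟨⟨fun _ => v x, continuous_const⟩, hconst (v x), rfl, rfl⟩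
    · have hvec : (x : Fin d → ℝ) ≠ (y : Fin d → ℝ) := fun h => hxy (Subtype.coe_injective h)
      obtain ⟨k, hk⟩ : ∃ k, (x : Fin d → ℝ) k ≠ (y : Fin d → ℝ) k := by
        by_contra h
        push_neg at h
        exact hvec (funext h)
      set c : ℝ := (v x - v y) / ((x : Fin d → ℝ) k - (y : Fin d → ℝ) k) with hc
      set b : ℝ := v y - c * (y : Fin d → ℝ) k with hb
      set A : Fin d → ℝ := fun k' => if k' = k then c else 0 with hA
      have hsum : ∀ z : Fin d → ℝ, (∑ k', A k' * z k') + b = c * z k + b := by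
        intro z
        congr 1
        rw [hA]
        simp [ite_mul]
      have hcc : c * ((x : Fin d → ℝ) k - (y : Fin d → ℝ) k) = v x - v y :=
        div_mul_cancel₀ _ (sub_ne_zero.mpr hk)
      refine ⟨⟨fun z => c * (z : Fin d → ℝ) k + b,
        (continuous_const.mul ((continuous_apply k).comp continuous_subtype_val)).add
          continuous_const⟩,
        ⟨fun z => (∑ k', A k' * z k') + b, isPWA_affine A b, fun z => (hsum z).symm⟩,
        ?_, ?_⟩
      · show c * (x : Fin d → ℝ) k + b = v x
        rw [hb]; linear_combination hcc
      · show c * (y : Fin d → ℝ) k + b = v y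
        rw [hb]; ring
  have hclos : closure L = ⊤ :=
    ContinuousMap.sublattice_closure_eq_top L ⟨_, hconst 0⟩ hinf hsup hsep
  have happrox : ∀ (g : (Fin d → ℝ) → ℝ), ContinuousOn g Φ → ∀ δ : ℝ, 0 < δ →
      ∃ p, IsPWA p ∧ ∀ φ ∈ Φ, |p φ - g φ| < δ := by
    intro g hg δ hδ
    set F : C(Φ, ℝ) := ⟨Φ.restrict g, hg.restrict⟩ with hF
    have hFc : F ∈ closure L := by rw [hclos]; trivial
    obtain ⟨G, hGL, hdist⟩ := Metric.mem_closure_iff.mp hFc δ hδ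
    obtain ⟨p, hp, hpe⟩ := hGL
    refine ⟨p, hp, fun φ hφ => ?_⟩
    have h1 : dist (F ⟨φ, hφ⟩) (G ⟨φ, hφ⟩) ≤ dist F G := ContinuousMap.dist_apply_le_dist _
    have h2 := hpe ⟨φ, hφ⟩
    have h3 : F ⟨φ, hφ⟩ = g φ := rfl
    rw [Real.dist_eq, h2, h3] at h1
    calc |p φ - g φ| = |g φ - p φ| := abs_sub_comm _ _
      _ ≤ dist F G := h1
      _ < δ := hdist
  obtain ⟨φ0, hφ0, hmin0⟩ := hΦ.exists_isMinOn hne (hcmax.sub hcmin)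
  set m : ℝ := νmax φ0 - νmin φ0 with hmdef
  have hm : 0 < m := sub_pos.mpr (hlt φ0 hφ0)
  have hgap : ∀ φ ∈ Φ, m ≤ νmax φ - νmin φ := fun φ hφ => isMinOn_iff.mp hmin0 φ hφ
  have hme : 0 < min ε 1 := lt_min hε one_pos
  obtain ⟨δ, hδ, hδdef⟩ : ∃ δ : ℝ, 0 < δ ∧ 8 * δ = min ε 1 * m :=
    ⟨min ε 1 * m / 8, div_pos (mul_pos hme hm) (by norm_num), by ring⟩
  obtain ⟨p, hp, hpa⟩ := happrox νmin hcmin δ hδ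
  obtain ⟨q, hq, hqa⟩ := happrox νmax hcmax δ hδ
  refine ⟨fun z => p z + δ, fun z => q z + (-δ), hp.add_const δ, hq.add_const (-δ), ?_⟩
  intro φ hφ
  have h1 := abs_lt.mp (hpa φ hφ)
  have h2 := abs_lt.mp (hqa φ hφ)
  have hgapφ := hgap φ hφ
  have hgpos : 0 < νmax φ - νmin φ := lt_of_lt_of_le hm hgapφ
  have hB : min ε 1 * m ≤ m := mul_le_of_le_one_left hm.le (min_le_right ε 1)
  have hC : ε * m ≤ ε * (νmax φ - νmin φ) := mul_le_mul_of_nonneg_left hgapφ hε.le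
  have hAm : min ε 1 * m ≤ ε * m := mul_le_mul_of_nonneg_right (min_le_left ε 1) hm.le
  refine ⟨?_, ?_, ?_, ?_⟩
  · show νmin φ ≤ p φ + δ
    linarith [h1.1]
  · show p φ + δ ≤ q φ + -δ
    linarith [hδdef, hB, hgapφ, h1.2, h2.1, hm]
  · show q φ + -δ ≤ νmax φ
    linarith [h2.2]
  · show 1 - ε ≤ (q φ + -δ - (p φ + δ)) / (νmax φ - νmin φ)
    rw [le_div_iff₀ hgpos]
    nlinarith [hC, hAm, hδdef, h1.1, h1.2, h2.1, h2.2, hm, hε, hgapφ]
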